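/- Let α and δ be holomorphic functions on a connected open set U ⊆ ℂ, not identically zero, and suppose there exist p, q ∈ U with ord_p(δ) < ord_p(α) and ord_q(α) < ord_q(δ). Then for any continuous positive function l on U, the condition l(x)⁻²|δ(x)|² ≠ l(x)²|α(x)|² cannot hold for all x ∈ U. -/

import Mathlib

/-- Let `α` and `δ` be holomorphic (analytic) on a connected open set `U ⊆ ℂ`, neither
identically zero on `U`, and suppose there are `p, q ∈ U` with
`ord_p δ < ord_p α` and `ord_q α < ord_q δ`.  Then for any continuous positive function
`l` on `U`, the nondegeneracy condition `l(x)⁻²|δ(x)|² ≠ l(x)²|α(x)|²` cannot hold at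
every point of `U`. -/
theorem degeneration_of_metric (U : Set ℂ) (hUopen : IsOpen U) (hUconn : IsConnected U)
    (α δ : ℂ → ℂ) (l : ℂ → ℝ)
    (hα : ∀ x ∈ U, AnalyticAt ℂ α x) (hδ : ∀ x ∈ U, AnalyticAt ℂ δ x)
    (hα0 : ¬ ∀ x ∈ U, α x = 0) (hδ0 : ¬ ∀ x ∈ U, δ x = 0)
    (hl : ContinuousOn l U) (hlpos : ∀ x ∈ U, 0 < l x)
    (p q : ℂ) (hp : p ∈ U) (hq : q ∈ U)
    (hordp : analyticOrderAt δ p < analyticOrderAt α p)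
    (hordq : analyticOrderAt α q < analyticOrderAt δ q) :
    ¬ ∀ x ∈ U, ((l x) ^ 2)⁻¹ * ‖δ x‖ ^ 2 ≠ (l x) ^ 2 * ‖α x‖ ^ 2 := by
  intro hne
  -- α p = 0 since ord_p α > ord_p δ ≥ 0
  have hαp : α p = 0 := by
    by_contra h
    have h0 : analyticOrderAt α p = (0:ℕ) := (AnalyticAt.analyticOrderAt_eq_natCast (hα p hp) (n := 0)).mpr
      ⟨α, hα p hp, h, Filter.Eventually.of_forall fun z => by simp⟩
    rw [h0] at hordp
    exact absurd hordp (by simp)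
  have hδq : δ q = 0 := by
    by_contra h
    have h0 : analyticOrderAt δ q = (0:ℕ) := (AnalyticAt.analyticOrderAt_eq_natCast (hδ q hq) (n := 0)).mpr
      ⟨δ, hδ q hq, h, Filter.Eventually.of_forall fun z => by simp⟩
    rw [h0] at hordq
    exact absurd hordq (by simp)
  set g : ℂ → ℝ := fun x => ((l x) ^ 2)⁻¹ * ‖δ x‖ ^ 2 - (l x) ^ 2 * ‖α x‖ ^ 2 with hg
  have hgc : ContinuousOn g U := by
    apply ContinuousOn.sub
    · apply ContinuousOn.mul
      · exact ((hl.pow 2).inv₀ (fun x hx => pow_ne_zero 2 (hlpos x hx).ne'))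
      · exact ((continuousOn_of_forall_continuousAt
          (fun x hx => (hδ x hx).continuousAt)).norm.pow 2)
    · exact (hl.pow 2).mul ((continuousOn_of_forall_continuousAt
        (fun x hx => (hα x hx).continuousAt)).norm.pow 2)
  have hgq : g q ≤ 0 := by simp [hg, hδq]; positivity
  have hgp : 0 ≤ g p := by simp [hg, hαp]; positivity
  have := hUconn.isPreconnected.intermediate_value hq hp hgc
  obtain ⟨x, hx, hx0⟩ := this ⟨hgq, hgp⟩
  exact hne x hx (by simpa [hg, sub_eq_zero] using hx0)
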